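/- Logarithmic bound on the gradient of a single-layer potential with bounded density. There exists a constant C ∈ (0, ∞), depending only on d, such that for every measurable u : ℝ^(d−1) → ℝ with |u| ≤ 1 almost everywhere and u = 0 outside the closed ball of radius 2 centered at the origin in ℝ^(d−1), every x′ ∈ ℝ^(d−1), and every x_d ∈ (0, 1/2]: | ∫_{{y′ ∈ ℝ^(d−1) : |y′| ≤ 2}} ( (x′ − y′, x_d) / |(x′ − y′, x_d)|^d ) u(y′) dy′ | ≤ C·log(1/x_d), where (x′ − y′, x_d) ∈ ℝ^d and |·| is the Euclidean norm on ℝ^d. -/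

import Mathlib

open MeasureTheory Filter Topology
open scoped ENNReal NNReal

noncomputable section

/-- Model of the hyperplane `ℝ^(d-1)`. -/
abbrev Hyp (d : ℕ) : Type := EuclideanSpace ℝ (Fin (d - 1))

/-- Model of the ambient space `ℝ^d`, split as horizontal × vertical. -/
abbrev Amb (d : ℕ) : Type := Hyp d × ℝ

/-- Squared Euclidean norm on the ambient space. -/
def nsq {d : ℕ} (v : Amb d) : ℝ := ‖v.1‖ ^ 2 + v.2 ^ 2

/-- The open cube `(−L/2, L/2)^(d−1)` in the hyperplane. -/
def baseQ (d : ℕ) (L : ℝ) : Set (Hyp d) := {x' | ∀ i, x' i ∈ Set.Ioo (-(L / 2)) (L / 2)}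

/-- The open box `Q_L = (−L/2, L/2)^(d−1) × (0, L)`. -/
def boxQ (d : ℕ) (L : ℝ) : Set (Amb d) := (baseQ d L) ×ˢ Set.Ioo (0 : ℝ) L

/-- The (open) bottom face of `Q_L`. -/
def botQ (d : ℕ) (L : ℝ) : Set (Amb d) := (baseQ d L) ×ˢ ({0} : Set ℝ)

/-- `Γ_L`: the lateral and top part of the boundary of `Q_L`. -/
def gammaQ (d : ℕ) (L : ℝ) : Set (Amb d) := frontier (boxQ d L) \ closure (botQ d L)

/-- The `(d−1)`-dimensional Hausdorff measure on the ambient space. -/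
def hMeas (d : ℕ) : Measure (Amb d) := μH[(d : ℝ) - 1]

/-- Divergence of a vector field on the hyperplane. -/
def divg {d : ℕ} (φ : Hyp d → Hyp d) (x : Hyp d) : ℝ :=
  ∑ i, fderiv ℝ φ x (EuclideanSpace.single i 1) i

/-- The set of test integrals defining the total variation of `u` on the open set `U`. -/
def tvSet (d : ℕ) (u : Hyp d → ℝ) (U : Set (Hyp d)) : Set ℝ :=
  {r | ∃ φ : Hyp d → Hyp d, ContDiff ℝ (⊤ : ℕ∞) φ ∧ HasCompactSupport φ ∧
        tsupport φ ⊆ U ∧ (∀ x, ‖φ x‖ ≤ 1) ∧ r = ∫ x in U, u x * divg φ x}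

/-- Total variation of `u` on the open set `U`. -/
def tv (d : ℕ) (u : Hyp d → ℝ) (U : Set (Hyp d)) : ℝ := sSup (tvSet d u U)

/-- The set of test integrals defining the periodic total variation over one cell. -/
def tvPerSet (d : ℕ) (L : ℝ) (u : Hyp d → ℝ) : Set ℝ :=
  {r | ∃ φ : Hyp d → Hyp d, ContDiff ℝ (⊤ : ℕ∞) φ ∧
        (∀ x i, φ (x + L • EuclideanSpace.single i 1) = φ x) ∧
        (∀ x, ‖φ x‖ ≤ 1) ∧ r = ∫ x in baseQ d L, u x * divg φ x}

/-- Periodic total variation of `u` over one periodicity cell. -/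
def tvPer (d : ℕ) (L : ℝ) (u : Hyp d → ℝ) : ℝ := sSup (tvPerSet d L u)

/-- Field (electrostatic) energy of `b` on `Q_L`. -/
def fieldE (d : ℕ) (L : ℝ) (b : Amb d → Amb d) : ℝ := ∫ x in boxQ d L, (1/2) * nsq (b x)

/-- The admissible class `A(Q_L)` (free boundary conditions on `Γ_L`). -/
structure memA (d : ℕ) (L : ℝ) (u : Hyp d → ℝ) (b : Amb d → Amb d) : Prop where
  meas_u : Measurable u
  pm_u : ∀ x ∈ baseQ d L, u x = 1 ∨ u x = -1
  tv_fin : BddAbove (tvSet d u (baseQ d L))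
  l2_b : MemLp b 2 (volume.restrict (boxQ d L))
  constraint : ∀ ζ : Amb d → ℝ, ContDiff ℝ (⊤ : ℕ∞) ζ → HasCompactSupport ζ →
      Disjoint (tsupport ζ) (gammaQ d L) →
      ∫ x in boxQ d L, fderiv ℝ ζ x (b x) = -∫ x' in baseQ d L, ζ (x', 0) * u x'

/-- The admissible class `A^0(Q_L)` (zero flux on `Γ_L`). -/
structure memA0 (d : ℕ) (L : ℝ) (u : Hyp d → ℝ) (b : Amb d → Amb d) : Prop where
  meas_u : Measurable u
  pm_u : ∀ x ∈ baseQ d L, u x = 1 ∨ u x = -1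
  tv_fin : BddAbove (tvSet d u (baseQ d L))
  l2_b : MemLp b 2 (volume.restrict (boxQ d L))
  constraint : ∀ ζ : Amb d → ℝ, ContDiff ℝ (⊤ : ℕ∞) ζ →
      ∫ x in boxQ d L, fderiv ℝ ζ x (b x) = -∫ x' in baseQ d L, ζ (x', 0) * u x'

/-- The admissible class `A^per(Q_L)` (horizontally periodic candidates). -/
structure memAper (d : ℕ) (L : ℝ) (u : Hyp d → ℝ) (b : Amb d → Amb d) : Prop where
  meas_u : Measurable u
  pm_u : ∀ x, u x = 1 ∨ u x = -1
  per_u : ∀ x i, u (x + L • EuclideanSpace.single i 1) = u x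
  tv_fin : BddAbove (tvPerSet d L u)
  l2_b : MemLp b 2 (volume.restrict (boxQ d L))
  per_b : ∀ (x' : Hyp d) (t : ℝ) (i : Fin (d - 1)),
      b (x' + L • EuclideanSpace.single i 1, t) = b (x', t)
  constraint : ∀ ζ : Amb d → ℝ, ContDiff ℝ (⊤ : ℕ∞) ζ →
      (∀ (x' : Hyp d) (t : ℝ) (i : Fin (d - 1)),
        ζ (x' + L • EuclideanSpace.single i 1, t) = ζ (x', t)) →
      (∃ a, a < L ∧ ∀ (x' : Hyp d) (t : ℝ), a ≤ t → ζ (x', t) = 0) →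
      ∫ x in boxQ d L, fderiv ℝ ζ x (b x) = -∫ x' in baseQ d L, ζ (x', 0) * u x'

/-- Total energy `E(u, b, Q_L)`. -/
def totE (d : ℕ) (L : ℝ) (u : Hyp d → ℝ) (b : Amb d → Amb d) : ℝ :=
  tv d u (baseQ d L) + fieldE d L b

/-- Periodic total energy `E^per(u, b, Q_L)`. -/
def totEper (d : ℕ) (L : ℝ) (u : Hyp d → ℝ) (b : Amb d → Amb d) : ℝ :=
  tvPer d L u + fieldE d L b

/-- `σ(Q_L)`. -/
def sigFree (d : ℕ) (L : ℝ) : ℝ :=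
  sInf {r | ∃ u b, memA d L u b ∧ r = totE d L u b / L ^ (d - 1)}

/-- `σ^0(Q_L)`. -/
def sigZero (d : ℕ) (L : ℝ) : ℝ :=
  sInf {r | ∃ u b, memA0 d L u b ∧ r = totE d L u b / L ^ (d - 1)}

/-- `σ^per(Q_L)`. -/
def sigPer (d : ℕ) (L : ℝ) : ℝ :=
  sInf {r | ∃ u b, memAper d L u b ∧ r = totEper d L u b / L ^ (d - 1)}

/-- `(u, b)` is a minimizer of `E^per` over `A^per(Q_L)`. -/
def IsMinPer (d : ℕ) (L : ℝ) (u : Hyp d → ℝ) (b : Amb d → Amb d) : Prop :=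
  memAper d L u b ∧ ∀ u' b', memAper d L u' b' → totEper d L u b ≤ totEper d L u' b'

/-- Local energy `E(u, b, Q_l)`. -/
def Eloc (d : ℕ) (l : ℝ) (u : Hyp d → ℝ) (b : Amb d → Amb d) : ℝ :=
  tv d u (baseQ d l) + fieldE d l b

/-- The volume-averaged shifted energy `F(β, l)`. -/
def Floc (d : ℕ) (u : Hyp d → ℝ) (b : Amb d → Amb d) (β l : ℝ) : ℝ :=
  (tv d u (baseQ d l) + ∫ x in boxQ d l, (1/2) * nsq (b x - ((0 : Hyp d), β))) / l ^ d

/-- `ζ` vanishes on a neighborhood of the closed bottom face of `Q_l`. -/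
def vanishesNearBottom (d : ℕ) (l : ℝ) (ζ : Amb d → ℝ) : Prop :=
  ∃ U : Set (Amb d), IsOpen U ∧ closure (botQ d l) ⊆ U ∧ ∀ x ∈ U, ζ x = 0

/-- `btil` has the same distributional divergence in `Q_l` and the same flux across the
lateral and top faces as `b` (the flux across the bottom face is unconstrained). -/
def sameFlux (d : ℕ) (l : ℝ) (b btil : Amb d → Amb d) : Prop :=
  ∀ ζ : Amb d → ℝ, ContDiff ℝ (⊤ : ℕ∞) ζ → vanishesNearBottom d l ζ →
    ∫ x in boxQ d l, fderiv ℝ ζ x (btil x) = ∫ x in boxQ d l, fderiv ℝ ζ x (b x)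

/-- `b₀` is the over-relaxed field on `Q_l` associated with `b`. -/
def IsOverRelaxedOf (d : ℕ) (l : ℝ) (b b₀ : Amb d → Amb d) : Prop :=
  MemLp b₀ 2 (volume.restrict (boxQ d l)) ∧ sameFlux d l b b₀ ∧
    ∀ b', MemLp b' 2 (volume.restrict (boxQ d l)) → sameFlux d l b b' →
      fieldE d l b₀ ≤ fieldE d l b'

/-- Admissible fields for the over-relaxed problem with flux data `h` on `Γ_L`. -/
def fluxAdmissible (d : ℕ) (L : ℝ) (h : Amb d → ℝ) (b : Amb d → Amb d) : Prop :=
  MemLp b 2 (volume.restrict (boxQ d L)) ∧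
  ∀ ζ : Amb d → ℝ, ContDiff ℝ (⊤ : ℕ∞) ζ → vanishesNearBottom d L ζ →
    ∫ x in boxQ d L, fderiv ℝ ζ x (b x) = -∫ x in gammaQ d L, ζ x * h x ∂(hMeas d)

/-- `b₀` is the over-relaxed field on `Q_L` with flux data `h`. -/
def IsOverRelaxedFlux (d : ℕ) (L : ℝ) (h : Amb d → ℝ) (b₀ : Amb d → Amb d) : Prop :=
  fluxAdmissible d L h b₀ ∧ ∀ b', fluxAdmissible d L h b' → fieldE d L b₀ ≤ fieldE d L b'

/-- Admissible fields for the relaxed problem with flux data `g` on `Γ_L`. -/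
def memRel (d : ℕ) (L : ℝ) (g : Amb d → ℝ) (b : Amb d → Amb d) : Prop :=
  MemLp b 2 (volume.restrict (boxQ d L)) ∧
  ∃ u : Hyp d → ℝ, Measurable u ∧ (∀ x' ∈ baseQ d L, |u x'| ≤ 1) ∧
    ∀ ζ : Amb d → ℝ, ContDiff ℝ (⊤ : ℕ∞) ζ →
      ∫ x in boxQ d L, fderiv ℝ ζ x (b x)
        = -(∫ x' in baseQ d L, ζ (x', 0) * u x') - ∫ x in gammaQ d L, ζ x * g x ∂(hMeas d)

/-- The relaxed energy `E_rel^g(Q_L)`. -/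
def Erel (d : ℕ) (L : ℝ) (g : Amb d → ℝ) : ℝ :=
  sInf {r | ∃ b, memRel d L g b ∧ r = fieldE d L b}

/-- `b` is a minimizer of the relaxed problem `E_rel^g(Q_L)`. -/
def IsRelMin (d : ℕ) (L : ℝ) (g : Amb d → ℝ) (b : Amb d → Amb d) : Prop :=
  memRel d L g b ∧ ∀ b', memRel d L g b' → fieldE d L b ≤ fieldE d L b'

/-- The admissible class `A^g(Q_L)` (flux boundary data `g` on `Γ_L`). -/
structure memAg (d : ℕ) (L : ℝ) (g : Amb d → ℝ) (u : Hyp d → ℝ) (b : Amb d → Amb d) : Prop where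
  meas_u : Measurable u
  pm_u : ∀ x ∈ baseQ d L, u x = 1 ∨ u x = -1
  tv_fin : BddAbove (tvSet d u (baseQ d L))
  l2_b : MemLp b 2 (volume.restrict (boxQ d L))
  constraint : ∀ ζ : Amb d → ℝ, ContDiff ℝ (⊤ : ℕ∞) ζ →
      ∫ x in boxQ d L, fderiv ℝ ζ x (b x)
        = -(∫ x' in baseQ d L, ζ (x', 0) * u x') - ∫ x in gammaQ d L, ζ x * g x ∂(hMeas d)

/-- Squared Euclidean norm of the (within-)gradient of `v : ℝ^d → ℝ`, computed with
derivatives within the set `S`. -/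
def gradSqW (d : ℕ) (S : Set (Amb d)) (v : Amb d → ℝ) (x : Amb d) : ℝ :=
  (∑ i, (fderivWithin ℝ v S x (EuclideanSpace.single i 1, (0 : ℝ))) ^ 2)
    + (fderivWithin ℝ v S x ((0 : Hyp d), (1 : ℝ))) ^ 2

/-- The Laplacian of `v : ℝ^d → ℝ`, as a sum of pure second partial derivatives. -/
def lap (d : ℕ) (v : Amb d → ℝ) (x : Amb d) : ℝ :=
  (∑ i, fderiv ℝ (fun y => fderiv ℝ v y (EuclideanSpace.single i 1, (0 : ℝ))) x
      (EuclideanSpace.single i 1, (0 : ℝ)))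
    + fderiv ℝ (fun y => fderiv ℝ v y ((0 : Hyp d), (1 : ℝ))) x ((0 : Hyp d), (1 : ℝ))

/-- The open cube `(0, l)^(d-1)` in the hyperplane. -/
def posQ (d : ℕ) (l : ℝ) : Set (Hyp d) := {x' | ∀ i, x' i ∈ Set.Ioo (0 : ℝ) l}

/-- The closed cube `[0, L]^d` in the ambient space. -/
def ccubeQ (d : ℕ) (L : ℝ) : Set (Amb d) :=
  {x | (∀ i, x.1 i ∈ Set.Icc (0 : ℝ) L) ∧ x.2 ∈ Set.Icc (0 : ℝ) L}

/-- The open cube `(0, L)^d` in the ambient space. -/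
def ocubeQ (d : ℕ) (L : ℝ) : Set (Amb d) :=
  {x | (∀ i, x.1 i ∈ Set.Ioo (0 : ℝ) L) ∧ x.2 ∈ Set.Ioo (0 : ℝ) L}

set_option maxHeartbeats 2000000 in
/-- **Logarithmic bound on the gradient of a single-layer potential with bounded density.**
If `|u| ≤ 1` a.e. and `u` vanishes outside the closed ball of radius 2 in the hyperplane,
then for `0 < x_d ≤ 1/2` the Euclidean norm of
`∫_{|y′|≤2} ((x′−y′, x_d)/|(x′−y′, x_d)|^d) u(y′) dy′` is at most `C·log(1/x_d)`. -/
theorem single_layer_log_bound (d : ℕ) (hd : 2 ≤ d) :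
    ∃ C : ℝ, 0 < C ∧
      ∀ u : Hyp d → ℝ, Measurable u →
        (∀ᵐ y' : Hyp d, |u y'| ≤ 1) →
        (∀ y' : Hyp d, y' ∉ Metric.closedBall (0 : Hyp d) 2 → u y' = 0) →
      ∀ x' : Hyp d, ∀ xd : ℝ, xd ∈ Set.Ioc (0 : ℝ) (1/2) →
        Real.sqrt (nsq (∫ y' in Metric.closedBall (0 : Hyp d) 2,
            u y' • (Real.sqrt (nsq ((x' - y', xd) : Amb d)) ^ d)⁻¹ • ((x' - y', xd) : Amb d)))
          ≤ C * Real.log (1 / xd) := by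
  classical
  have hn1 : 1 ≤ d - 1 := by omega
  set n : ℕ := d - 1 with hn
  have hdn : d = n + 1 := by omega
  set B : ℝ := (volume (Metric.ball (0 : Hyp d) 1)).toReal with hB
  set V : ℝ := (volume (Metric.closedBall (0 : Hyp d) 2)).toReal with hV
  have hB0 : 0 ≤ B := ENNReal.toReal_nonneg
  have hV0 : 0 ≤ V := ENNReal.toReal_nonneg
  set A : ℝ := 2 * ((n : ℝ) * B * (1 + Real.log 2)) + 2 * ((2:ℝ)^n)⁻¹ * V with hA
  have hlog2 : (0:ℝ) < Real.log 2 := Real.log_pos (by norm_num)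
  have hA0 : 0 ≤ A := by positivity
  refine ⟨2 * A + 2 * ((n:ℝ) * B) + 1, by positivity, ?_⟩
  intro u hu hu1 _ x' xd hxd
  obtain ⟨hxd0, hxd2⟩ := hxd
  have hxdne : xd ≠ 0 := ne_of_gt hxd0
  have hxd2' : xd ≤ 2 := by linarith
  set L := Real.log (1 / xd) with hL
  have hL2 : Real.log 2 ≤ L := by
    apply Real.log_le_log (by norm_num)
    rw [le_div_iff₀ hxd0]; linarith
  have hLhalf : (1/2 : ℝ) < L := lt_of_lt_of_le (by
    have := Real.log_two_gt_d9; linarith) hL2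
  have hLpos : 0 < L := by linarith
  set S := Metric.closedBall (0 : Hyp d) 2 with hS
  have hSfin : volume S ≠ ⊤ := (measure_closedBall_lt_top).ne
  set F : ℝ → ℝ := fun r => if r ≤ 2 then ((max r xd) ^ n)⁻¹ else 0 with hF
  have hFmeas : Measurable F := Measurable.ite measurableSet_Iic
    (((measurable_id.max measurable_const).pow_const n).inv) measurable_const
  have hFnonneg : ∀ r, 0 ≤ F r := by
    intro r
    rw [hF]; dsimp only
    split
    · positivity
    · exact le_rfl
  have hmaxpos : ∀ r : ℝ, 0 < max r xd := fun r => lt_max_of_lt_right hxd0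
  have hFbdd : ∀ r, F r ≤ (xd ^ n)⁻¹ := by
    intro r
    rw [hF]; dsimp only
    split
    · exact inv_anti₀ (by positivity) (pow_le_pow_left₀ hxd0.le (le_max_right _ _) n)
    · positivity
  set D : Hyp d → ℝ := fun y => F ‖x' - y‖ + ((2:ℝ)^n)⁻¹ with hD
  have hDmeas : Measurable D :=
    (hFmeas.comp ((continuous_const.sub continuous_id).norm.measurable)).add measurable_const
  have hDnonneg : ∀ y, 0 ≤ D y := fun y => by
    have := hFnonneg ‖x' - y‖
    rw [hD]; dsimp only; positivity
  have hDbdd : ∀ y, D y ≤ (xd ^ n)⁻¹ + ((2:ℝ)^n)⁻¹ := fun y => by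
    have := hFbdd ‖x' - y‖
    rw [hD]; dsimp only; linarith
  -- the pointwise bound on the integrand
  have key : ∀ y : Hyp d, |u y| ≤ 1 →
      ‖u y • (Real.sqrt (nsq ((x' - y, xd) : Amb d)) ^ d)⁻¹ • ((x' - y, xd) : Amb d)‖ ≤ D y := by
    intro y hy
    set w := x' - y with hw
    set s := Real.sqrt (nsq ((w, xd) : Amb d)) with hs
    have hnsq : nsq ((w, xd) : Amb d) = ‖w‖^2 + xd^2 := rfl
    have hws : ‖w‖ ≤ s := by
      rw [hs, hnsq]
      calc ‖w‖ = Real.sqrt (‖w‖^2) := (Real.sqrt_sq (norm_nonneg _)).symm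
        _ ≤ _ := Real.sqrt_le_sqrt (by nlinarith)
    have hxs : xd ≤ s := by
      rw [hs, hnsq]
      calc xd = Real.sqrt (xd^2) := (Real.sqrt_sq hxd0.le).symm
        _ ≤ _ := Real.sqrt_le_sqrt (by nlinarith)
    have hspos : 0 < s := lt_of_lt_of_le hxd0 hxs
    have hzle : ‖((w, xd) : Amb d)‖ ≤ s := by
      rw [Prod.norm_def]
      exact max_le hws (by rw [Real.norm_eq_abs, abs_of_pos hxd0]; exact hxs)
    have hnorm : ‖u y • (s ^ d)⁻¹ • ((w, xd) : Amb d)‖ ≤ (s ^ n)⁻¹ := by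
      rw [norm_smul, norm_smul, Real.norm_eq_abs, Real.norm_eq_abs,
        abs_of_nonneg (by positivity : (0:ℝ) ≤ (s ^ d)⁻¹)]
      calc |u y| * ((s ^ d)⁻¹ * ‖((w, xd) : Amb d)‖)
          ≤ 1 * ((s ^ d)⁻¹ * s) := by
            apply mul_le_mul hy (by
              apply mul_le_mul_of_nonneg_left hzle (by positivity)) (by positivity) zero_le_one
        _ = (s ^ n)⁻¹ := by
            rw [hdn, pow_succ]
            field_simp
    have hsn : ((max ‖w‖ xd) ^ n)⁻¹ ≤ D y := by
      rw [hD]; dsimp only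
      rw [hF]; dsimp only
      rw [← hw]
      by_cases h2 : ‖w‖ ≤ 2
      · rw [if_pos h2]
        have h2n : (0:ℝ) ≤ ((2:ℝ)^n)⁻¹ := by positivity
        linarith
      · rw [if_neg h2]
        push_neg at h2
        have h2' : (2:ℝ) ≤ max ‖w‖ xd := le_trans h2.le (le_max_left _ _)
        have : ((max ‖w‖ xd) ^ n)⁻¹ ≤ ((2:ℝ)^n)⁻¹ :=
          inv_anti₀ (by positivity) (pow_le_pow_left₀ (by norm_num) h2' n)
        linarith
    refine le_trans hnorm (le_trans ?_ hsn)
    exact inv_anti₀ (pow_pos (hmaxpos ‖w‖) n)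
      (pow_le_pow_left₀ (hmaxpos ‖w‖).le (max_le hws hxs) n)
  -- integrability of D on S
  have hDint : IntegrableOn D S := Measure.integrableOn_of_bounded hSfin
    hDmeas.aestronglyMeasurable
    (Filter.Eventually.of_forall (fun y => by
      rw [Real.norm_eq_abs, abs_of_nonneg (hDnonneg y)]; exact hDbdd y))
  set W := ∫ y' in S, u y' • (Real.sqrt (nsq ((x' - y', xd) : Amb d)) ^ d)⁻¹ •
      ((x' - y', xd) : Amb d) with hW
  have h1 : ‖W‖ ≤ ∫ y in S, D y := by
    rw [hW]
    apply norm_integral_le_of_norm_le hDint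
    filter_upwards [ae_restrict_of_ae hu1] with y hy
    exact key y hy
  have h0 : Real.sqrt (nsq W) ≤ 2 * ‖W‖ := by
    have hf' : ‖W.1‖ ≤ ‖W‖ := norm_fst_le W
    have hs' : |W.2| ≤ ‖W‖ := by rw [← Real.norm_eq_abs]; exact norm_snd_le W
    have hnsqW : nsq W ≤ (2 * ‖W‖)^2 := by
      have hdef : nsq W = ‖W.1‖^2 + W.2^2 := rfl
      rw [hdef]
      have hW2 : W.2^2 ≤ ‖W‖^2 := by
        rw [← sq_abs]; exact pow_le_pow_left₀ (abs_nonneg _) hs' 2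
      nlinarith [norm_nonneg W, norm_nonneg W.1]
    calc Real.sqrt (nsq W) ≤ Real.sqrt ((2 * ‖W‖)^2) := Real.sqrt_le_sqrt hnsqW
      _ = 2 * ‖W‖ := Real.sqrt_sq (by positivity)
  -- splitting the integral of D
  have hFtransMeas : Measurable (fun y : Hyp d => F ‖x' - y‖) :=
    hFmeas.comp ((continuous_const.sub continuous_id).norm.measurable)
  have hFSint : IntegrableOn (fun y => F ‖x' - y‖) S := Measure.integrableOn_of_bounded hSfin
    hFtransMeas.aestronglyMeasurable
    (Filter.Eventually.of_forall fun y => by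
      rw [Real.norm_eq_abs, abs_of_nonneg (hFnonneg _)]; exact hFbdd _)
  have hsplitD : ∫ y in S, D y = (∫ y in S, F ‖x' - y‖) + ((2:ℝ)^n)⁻¹ * V := by
    rw [hD]
    rw [integral_add hFSint (integrableOn_const hSfin)]
    rw [setIntegral_const, smul_eq_mul, measureReal_def, hV]
    ring
  -- global integrability and translation invariance
  have hFglobal : Integrable (fun y : Hyp d => F ‖x' - y‖) := by
    have heq : (fun y : Hyp d => F ‖x' - y‖) =
        (Metric.closedBall x' 2).indicator (fun y => F ‖x' - y‖) := by
      funext y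
      by_cases h : y ∈ Metric.closedBall x' 2
      · rw [Set.indicator_of_mem h]
      · rw [Set.indicator_of_notMem h]
        have h' : ¬ ‖x' - y‖ ≤ 2 := by
          simpa [Metric.mem_closedBall, dist_eq_norm, norm_sub_rev] using h
        rw [hF]; dsimp only; rw [if_neg h']
    rw [heq, integrable_indicator_iff measurableSet_closedBall]
    exact Measure.integrableOn_of_bounded measure_closedBall_lt_top.ne
      hFtransMeas.aestronglyMeasurable
      (Filter.Eventually.of_forall fun y => by
        rw [Real.norm_eq_abs, abs_of_nonneg (hFnonneg _)]; exact hFbdd _)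
  have hFle : (∫ y in S, F ‖x' - y‖) ≤ ∫ y : Hyp d, F ‖x' - y‖ :=
    setIntegral_le_integral hFglobal (Filter.Eventually.of_forall fun y => hFnonneg _)
  have htrans : (∫ y : Hyp d, F ‖x' - y‖) = ∫ y : Hyp d, F ‖y‖ :=
    integral_sub_left_eq_self (fun y : Hyp d => F ‖y‖) volume x'
  -- polar coordinates
  haveI : Nontrivial (Hyp d) := Module.nontrivial_of_finrank_pos (R := ℝ)
    (by rw [finrank_euclideanSpace_fin]; omega)
  have hpolar : (∫ y : Hyp d, F ‖y‖)
      = (n : ℝ) * (B * ∫ r in Set.Ioi (0:ℝ), r ^ (n - 1) * F r) := by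
    have h := MeasureTheory.integral_fun_norm_addHaar (volume : Measure (Hyp d)) F
    simp only [finrank_euclideanSpace_fin, ← hn] at h
    simp only [smul_eq_mul, nsmul_eq_mul] at h
    rw [h, hB, measureReal_def]
  -- the 1D radial integral
  have hgmeas : Measurable (fun r : ℝ => r ^ (n - 1) * F r) :=
    (measurable_id.pow_const (n - 1)).mul hFmeas
  have hgnonneg : ∀ r : ℝ, 0 < r → 0 ≤ r ^ (n - 1) * F r := fun r hr => by
    have := hFnonneg r; positivity
  have hInt02 : IntegrableOn (fun r : ℝ => r ^ (n - 1) * F r) (Set.Ioc (0:ℝ) 2) := by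
    apply Measure.integrableOn_of_bounded measure_Ioc_lt_top.ne hgmeas.aestronglyMeasurable
    rw [ae_restrict_iff' measurableSet_Ioc]
    refine Filter.Eventually.of_forall fun r hr => ?_
    rw [Real.norm_eq_abs, abs_of_nonneg (hgnonneg r hr.1)]
    exact mul_le_mul (pow_le_pow_left₀ hr.1.le hr.2 _) (hFbdd r) (hFnonneg r) (by positivity)
  have heqz : Set.EqOn (fun r : ℝ => r ^ (n - 1) * F r) (fun _ => (0:ℝ)) (Set.Ioi 2) := by
    intro r hr
    dsimp only
    rw [hF]; dsimp only
    rw [if_neg (not_le.mpr hr)]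
    ring
  have hIntIoi2 : IntegrableOn (fun r : ℝ => r ^ (n - 1) * F r) (Set.Ioi (2:ℝ)) :=
    (integrableOn_zero (μ := volume)).congr_fun heqz.symm measurableSet_Ioi
  have hIoi2zero : ∫ r in Set.Ioi (2:ℝ), r ^ (n - 1) * F r = 0 := by
    rw [setIntegral_congr_fun measurableSet_Ioi heqz, integral_zero]
  have hIoiSplit : ∫ r in Set.Ioi (0:ℝ), r ^ (n - 1) * F r
      = (∫ r in Set.Ioc (0:ℝ) 2, r ^ (n - 1) * F r)
        + ∫ r in Set.Ioi (2:ℝ), r ^ (n - 1) * F r := by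
    rw [← setIntegral_union (Set.Ioc_disjoint_Ioi le_rfl) measurableSet_Ioi hInt02 hIntIoi2,
      Set.Ioc_union_Ioi_eq_Ioi (by norm_num : (0:ℝ) ≤ 2)]
  have hsplit2 : ∫ r in Set.Ioc (0:ℝ) 2, r ^ (n - 1) * F r
      = (∫ r in Set.Ioc (0:ℝ) xd, r ^ (n - 1) * F r)
        + ∫ r in Set.Ioc xd 2, r ^ (n - 1) * F r := by
    rw [← setIntegral_union (Set.Ioc_disjoint_Ioc_of_le le_rfl) measurableSet_Ioc
      (hInt02.mono_set (Set.Ioc_subset_Ioc_right hxd2'))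
      (hInt02.mono_set (Set.Ioc_subset_Ioc_left hxd0.le)),
      Set.Ioc_union_Ioc_eq_Ioc hxd0.le hxd2']
  have hp1 : ∫ r in Set.Ioc (0:ℝ) xd, r ^ (n - 1) * F r ≤ 1 := by
    have hb : ∀ r ∈ Set.Ioc (0:ℝ) xd, ‖r ^ (n - 1) * F r‖ ≤ xd⁻¹ := by
      intro r hr
      have hr2 : r ≤ 2 := le_trans hr.2 hxd2'
      have hFr : F r = (xd ^ n)⁻¹ := by
        rw [hF]; dsimp only; rw [if_pos hr2, max_eq_right hr.2]
      rw [Real.norm_eq_abs, abs_of_nonneg (hgnonneg r hr.1), hFr]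
      have hle1 : r ^ (n - 1) ≤ xd ^ (n - 1) := pow_le_pow_left₀ hr.1.le hr.2 _
      have heq2 : xd ^ (n - 1) * (xd ^ n)⁻¹ = xd⁻¹ := by
        have hxp : xd ^ n = xd ^ (n - 1) * xd := by
          rw [← pow_succ]; congr 1; omega
        rw [hxp]
        field_simp
      calc r ^ (n - 1) * (xd ^ n)⁻¹ ≤ xd ^ (n - 1) * (xd ^ n)⁻¹ :=
            mul_le_mul_of_nonneg_right hle1 (by positivity)
        _ = xd⁻¹ := heq2
    have hkey := norm_setIntegral_le_of_norm_le_const (μ := volume) (s := Set.Ioc (0:ℝ) xd)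
      measure_Ioc_lt_top hb
    rw [measureReal_def, Real.volume_Ioc] at hkey
    have h2 : xd⁻¹ * (ENNReal.ofReal (xd - 0)).toReal = 1 := by
      rw [sub_zero, ENNReal.toReal_ofReal hxd0.le, inv_mul_cancel₀ hxdne]
    calc ∫ r in Set.Ioc (0:ℝ) xd, r ^ (n - 1) * F r
        ≤ ‖∫ r in Set.Ioc (0:ℝ) xd, r ^ (n - 1) * F r‖ := le_abs_self _
      _ ≤ xd⁻¹ * (ENNReal.ofReal (xd - 0)).toReal := hkey
      _ = 1 := h2
  have hp2 : ∫ r in Set.Ioc xd 2, r ^ (n - 1) * F r = Real.log 2 + L := by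
    have heq : Set.EqOn (fun r : ℝ => r ^ (n - 1) * F r) (fun r => r⁻¹) (Set.Ioc xd 2) := by
      intro r hr
      have hr0 : 0 < r := lt_trans hxd0 hr.1
      dsimp only
      rw [hF]; dsimp only
      rw [if_pos hr.2, max_eq_left hr.1.le]
      have hrp : r ^ n = r ^ (n - 1) * r := by
        rw [← pow_succ]; congr 1; omega
      rw [hrp]
      field_simp
    rw [setIntegral_congr_fun measurableSet_Ioc heq,
      ← intervalIntegral.integral_of_le hxd2',
      integral_inv (by
        intro hmem
        rw [Set.uIcc_of_le hxd2'] at hmem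
        exact absurd hmem.1 (not_le.mpr hxd0))]
    rw [Real.log_div (by norm_num) hxdne, hL, one_div, Real.log_inv]
    ring
  have hJ : ∫ r in Set.Ioi (0:ℝ), r ^ (n - 1) * F r ≤ 1 + (Real.log 2 + L) := by
    rw [hIoiSplit, hIoi2zero, hsplit2, hp2]
    linarith
  -- assembling everything
  have hND : ∫ y in S, D y ≤ (n:ℝ) * (B * (1 + (Real.log 2 + L))) + ((2:ℝ)^n)⁻¹ * V := by
    rw [hsplitD]
    have hmain : (∫ y in S, F ‖x' - y‖) ≤ (n:ℝ) * (B * (1 + (Real.log 2 + L))) := by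
      refine le_trans hFle ?_
      rw [htrans, hpolar]
      exact mul_le_mul_of_nonneg_left (mul_le_mul_of_nonneg_left hJ hB0) (Nat.cast_nonneg n)
    linarith
  have hnB0 : 0 ≤ (n:ℝ) * B := mul_nonneg (Nat.cast_nonneg n) hB0
  calc Real.sqrt (nsq W) ≤ 2 * ‖W‖ := h0
    _ ≤ 2 * ∫ y in S, D y := by linarith
    _ ≤ 2 * ((n:ℝ) * (B * (1 + (Real.log 2 + L))) + ((2:ℝ)^n)⁻¹ * V) := by linarith
    _ = A + 2 * ((n:ℝ) * B) * L := by rw [hA]; ring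
    _ ≤ (2 * A + 2 * ((n:ℝ) * B) + 1) * L := by nlinarith [mul_nonneg hA0 (by linarith : (0:ℝ) ≤ 2 * L - 1)]
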